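/- Equip Bool with the discrete topology and FreeGroup ℕ → Bool with the product topology. Then the set of all χ : FreeGroup ℕ → Bool such that there exists a normal subgroup N of FreeGroup ℕ with underlying set {g | χ g = true} and with the quotient group FreeGroup ℕ ⧸ N sofic is a Gδ subset of FreeGroup ℕ → Bool. -/
import Mathlib


/-- Normalized Hamming distance between two maps `Fin d → Fin d`. -/
noncomputable def normHammingDist {d : ℕ} (π τ : Fin d → Fin d) : ℝ :=
  ((Finset.univ.filter fun i => π i ≠ τ i).card : ℝ) / d

/-- A group `G` is sofic if every finite subset admits, for every `ε > 0`,
an `(F, ε)`-approximation by permutations of a finite set. -/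
def IsSofic (G : Type*) [Group G] : Prop :=
  ∀ (F : Finset G) (ε : ℝ), 0 < ε →
    ∃ d : ℕ, 1 ≤ d ∧ ∃ σ : G → Equiv.Perm (Fin d),
      ((1 : G) ∈ F → σ 1 = Equiv.refl (Fin d)) ∧
      (∀ u ∈ F, ∀ v ∈ F, ∀ w ∈ F, u * v = w →
        normHammingDist (fun i => σ u (σ v i)) (σ w) < ε) ∧
      (∀ u ∈ F, ∀ v ∈ F, u ≠ v →
        1 - ε < normHammingDist (σ u) (σ v))

instance : Countable (FreeGroup ℕ) := FreeGroup.toWord_injective.countable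

open Set

lemma isOpen_eval (g : FreeGroup ℕ) (b : Bool) :
    IsOpen {χ : FreeGroup ℕ → Bool | χ g = b} := by
  have : {χ : FreeGroup ℕ → Bool | χ g = b} =
      (fun χ : FreeGroup ℕ → Bool => χ g) ⁻¹' {b} := rfl
  rw [this]
  exact (isOpen_discrete ({b} : Set Bool)).preimage (continuous_apply g)

lemma isClosed_eval (g : FreeGroup ℕ) (b : Bool) :
    IsClosed {χ : FreeGroup ℕ → Bool | χ g = b} := by
  have : {χ : FreeGroup ℕ → Bool | χ g = b} =
      (fun χ : FreeGroup ℕ → Bool => χ g) ⁻¹' {b} := rfl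
  rw [this]
  exact (isClosed_discrete ({b} : Set Bool)).preimage (continuous_apply g)

lemma isOpen_imp2 (a c : FreeGroup ℕ) :
    IsOpen {χ : FreeGroup ℕ → Bool | χ a = true → χ c = true} := by
  have h : {χ : FreeGroup ℕ → Bool | χ a = true → χ c = true} =
      {χ : FreeGroup ℕ → Bool | χ a = true}ᶜ ∪ {χ : FreeGroup ℕ → Bool | χ c = true} := by
    ext χ; simp only [mem_union, mem_compl_iff, mem_setOf_eq]; tauto
  rw [h]
  exact (isClosed_eval a true).isOpen_compl.union (isOpen_eval c true)

lemma isOpen_imp3 (a b c : FreeGroup ℕ) :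
    IsOpen {χ : FreeGroup ℕ → Bool | χ a = true → χ b = true → χ c = true} := by
  have h : {χ : FreeGroup ℕ → Bool | χ a = true → χ b = true → χ c = true} =
      {χ : FreeGroup ℕ → Bool | χ a = true}ᶜ ∪
        {χ : FreeGroup ℕ → Bool | χ b = true → χ c = true} := by
    ext χ; simp only [mem_union, mem_compl_iff, mem_setOf_eq]; tauto
  rw [h]
  exact (isClosed_eval a true).isOpen_compl.union (isOpen_imp2 b c)

/-- The finitary sofic-approximation condition, expressed purely in terms of the code `χ`. -/
def CondSet (E : Finset (FreeGroup ℕ)) (ε : ℝ) : Set (FreeGroup ℕ → Bool) :=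
  {χ | ∃ d : ℕ, 1 ≤ d ∧ ∃ τ : FreeGroup ℕ → Equiv.Perm (Fin d),
    (∀ u ∈ E, χ u = true → τ u = Equiv.refl (Fin d)) ∧
    (∀ u ∈ E, ∀ v ∈ E, ∀ w ∈ E, χ (u * v * w⁻¹) = true →
      normHammingDist (fun i => τ u (τ v i)) (τ w) < ε) ∧
    (∀ u ∈ E, ∀ v ∈ E, χ (u * v⁻¹) = false →
      1 - ε < normHammingDist (τ u) (τ v))}

lemma isOpen_condSet (E : Finset (FreeGroup ℕ)) (ε : ℝ) : IsOpen (CondSet E ε) := by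
  classical
  rw [isOpen_pi_iff]
  rintro χ ⟨d, hd, τ, hb, hc, hsep⟩
  refine ⟨E ∪ (E ×ˢ E ×ˢ E).image (fun p => p.1 * p.2.1 * p.2.2⁻¹) ∪
      (E ×ˢ E).image (fun p => p.1 * p.2⁻¹),
    fun a => {χ a}, fun a _ => ⟨isOpen_discrete _, rfl⟩, ?_⟩
  intro χ' hχ'
  have hK : ∀ g ∈ E ∪ (E ×ˢ E ×ˢ E).image (fun p => p.1 * p.2.1 * p.2.2⁻¹) ∪
      (E ×ˢ E).image (fun p => p.1 * p.2⁻¹), χ' g = χ g := by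
    intro g hg
    exact hχ' g (by exact_mod_cast hg)
  refine ⟨d, hd, τ, ?_, ?_, ?_⟩
  · intro u hu h
    refine hb u hu ?_
    rw [← hK u (by simp [Finset.mem_union, hu])]; exact h
  · intro u hu v hv w hw h
    refine hc u hu v hv w hw ?_
    rw [← hK (u * v * w⁻¹) ?_]
    · exact h
    · simp only [Finset.mem_union, Finset.mem_image, Finset.mem_product]
      exact Or.inl (Or.inr ⟨(u, v, w), ⟨hu, hv, hw⟩, rfl⟩)
  · intro u hu v hv h
    refine hsep u hu v hv ?_
    rw [← hK (u * v⁻¹) ?_]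
    · exact h
    · simp only [Finset.mem_union, Finset.mem_image, Finset.mem_product]
      exact Or.inr ⟨(u, v), ⟨hu, hv⟩, rfl⟩

/-- The set of codes of normal subgroups of `FreeGroup ℕ` with sofic quotient is a
`Gδ` subset of the Cantor cube `FreeGroup ℕ → Bool`. -/
theorem isGdelta_sofic_quotient_codes :
    IsGδ {χ : FreeGroup ℕ → Bool |
      ∃ N : Subgroup (FreeGroup ℕ), ∃ hN : N.Normal,
        (N : Set (FreeGroup ℕ)) = {g : FreeGroup ℕ | χ g = true} ∧
        IsSofic (FreeGroup ℕ ⧸ N)} := by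
  classical
  have key : {χ : FreeGroup ℕ → Bool |
      ∃ N : Subgroup (FreeGroup ℕ), ∃ hN : N.Normal,
        (N : Set (FreeGroup ℕ)) = {g : FreeGroup ℕ | χ g = true} ∧
        IsSofic (FreeGroup ℕ ⧸ N)} =
      ({χ : FreeGroup ℕ → Bool | χ 1 = true} ∩
        ⋂ (a : FreeGroup ℕ) (b : FreeGroup ℕ),
          ({χ : FreeGroup ℕ → Bool | χ a = true → χ b = true → χ (a * b) = true} ∩
           {χ : FreeGroup ℕ → Bool | χ a = true → χ a⁻¹ = true} ∩
           {χ : FreeGroup ℕ → Bool | χ a = true → χ (b * a * b⁻¹) = true})) ∩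
      ⋂ (E : Finset (FreeGroup ℕ)) (n : ℕ), CondSet E (1 / (n + 1)) := by
    ext χ
    simp only [mem_setOf_eq, mem_inter_iff, mem_iInter]
    constructor
    · rintro ⟨N, hN, hNs, hsof⟩
      have hmem : ∀ g : FreeGroup ℕ, g ∈ N ↔ χ g = true := fun g => Set.ext_iff.mp hNs g
      refine ⟨⟨(hmem 1).mp N.one_mem, fun a b => ⟨⟨?_, ?_⟩, ?_⟩⟩, ?_⟩
      · intro ha hb
        exact (hmem _).mp (N.mul_mem ((hmem a).mpr ha) ((hmem b).mpr hb))
      · intro ha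
        exact (hmem _).mp (N.inv_mem ((hmem a).mpr ha))
      · intro ha
        exact (hmem _).mp (hN.conj_mem a ((hmem a).mpr ha) b)
      · intro E n
        have hε : (0 : ℝ) < 1 / (n + 1) := by positivity
        obtain ⟨d, hd, σ, h1, hmul, hsep⟩ :=
          hsof (E.image (QuotientGroup.mk : FreeGroup ℕ → FreeGroup ℕ ⧸ N)) _ hε
        refine ⟨d, hd, fun g => σ (QuotientGroup.mk g), ?_, ?_, ?_⟩
        · intro u hu hχ
          have h1q : (QuotientGroup.mk u : FreeGroup ℕ ⧸ N) = 1 :=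
            (QuotientGroup.eq_one_iff u).mpr ((hmem u).mpr hχ)
          have : (1 : FreeGroup ℕ ⧸ N) ∈ E.image QuotientGroup.mk :=
            h1q ▸ Finset.mem_image_of_mem _ hu
          show σ (QuotientGroup.mk u) = Equiv.refl (Fin d)
          rw [show (QuotientGroup.mk u : FreeGroup ℕ ⧸ N) = 1 from h1q]
          exact h1 this
        · intro u hu v hv w hw hχ
          have h : (QuotientGroup.mk u : FreeGroup ℕ ⧸ N) * QuotientGroup.mk v
              = QuotientGroup.mk w := by
            have h0 : (QuotientGroup.mk (u * v * w⁻¹) : FreeGroup ℕ ⧸ N) = 1 :=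
              (QuotientGroup.eq_one_iff _).mpr ((hmem _).mpr hχ)
            rw [QuotientGroup.mk_mul, QuotientGroup.mk_mul, QuotientGroup.mk_inv,
              mul_inv_eq_one] at h0
            exact h0
          exact hmul _ (Finset.mem_image_of_mem _ hu) _ (Finset.mem_image_of_mem _ hv)
            _ (Finset.mem_image_of_mem _ hw) h
        · intro u hu v hv hχ
          have h : (QuotientGroup.mk u : FreeGroup ℕ ⧸ N) ≠ QuotientGroup.mk v := by
            intro h
            have : u * v⁻¹ ∈ N := by
              refine (QuotientGroup.eq_one_iff _).mp ?_
              rw [QuotientGroup.mk_mul, QuotientGroup.mk_inv, h, mul_inv_cancel]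
            rw [(hmem _).mp this] at hχ
            simp at hχ
          exact hsep _ (Finset.mem_image_of_mem _ hu) _ (Finset.mem_image_of_mem _ hv) h
    · rintro ⟨⟨h1, hcl⟩, hcond⟩
      set NN : Subgroup (FreeGroup ℕ) :=
        { carrier := {g | χ g = true},
          one_mem' := h1,
          mul_mem' := fun {a b} ha hb => ((hcl a b).1).1 ha hb,
          inv_mem' := fun {a} ha => ((hcl a a).1).2 ha } with hNN
      haveI hNNn : NN.Normal := ⟨fun a ha g => (hcl a g).2 ha⟩
      refine ⟨NN, hNNn, rfl, ?_⟩
      intro F ε hε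
      obtain ⟨n, hn⟩ := exists_nat_one_div_lt hε
      obtain ⟨d, hd, τ, hb, hc, hsep⟩ := hcond (F.image (fun q => q.out)) n
      have hout : ∀ q : FreeGroup ℕ ⧸ NN, QuotientGroup.mk q.out = q := fun q =>
        QuotientGroup.out_eq' q
      refine ⟨d, hd, fun g => τ g.out, ?_, ?_, ?_⟩
      · intro h1F
        refine hb _ (Finset.mem_image_of_mem _ h1F) ?_
        show (1 : FreeGroup ℕ ⧸ NN).out ∈ NN
        exact (QuotientGroup.eq_one_iff _).mp (hout 1)
      · intro u hu v hv w hw huv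
        refine lt_trans (hc u.out (Finset.mem_image_of_mem _ hu)
          v.out (Finset.mem_image_of_mem _ hv) w.out (Finset.mem_image_of_mem _ hw) ?_) hn
        show u.out * v.out * w.out⁻¹ ∈ NN
        refine (QuotientGroup.eq_one_iff _).mp ?_
        rw [QuotientGroup.mk_mul, QuotientGroup.mk_mul, QuotientGroup.mk_inv,
          hout, hout, hout, huv, mul_inv_cancel]
      · intro u hu v hv huv
        have hfalse : χ (u.out * v.out⁻¹) = false := by
          cases h : χ (u.out * v.out⁻¹) with
          | false => rfl
          | true =>
            exfalso
            apply huv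
            have : (QuotientGroup.mk (u.out * v.out⁻¹) : FreeGroup ℕ ⧸ NN) = 1 :=
              (QuotientGroup.eq_one_iff _).mpr (show u.out * v.out⁻¹ ∈ NN from h)
            rw [QuotientGroup.mk_mul, QuotientGroup.mk_inv, hout, hout,
              mul_inv_eq_one] at this
            exact this
        have := hsep u.out (Finset.mem_image_of_mem _ hu)
          v.out (Finset.mem_image_of_mem _ hv) hfalse
        have h2 : 1 - ε < 1 - 1 / ((n : ℝ) + 1) := by linarith
        exact lt_trans h2 this
  rw [key]
  refine IsGδ.inter (IsGδ.inter ?_ ?_) ?_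
  · exact (isOpen_eval 1 true).isGδ
  · exact .iInter fun a => .iInter fun b =>
      (((isOpen_imp3 a b (a * b)).inter (isOpen_imp2 a a⁻¹)).inter
        (isOpen_imp2 a (b * a * b⁻¹))).isGδ
  · exact .iInter fun E => .iInter fun n => (isOpen_condSet E _).isGδ
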